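/- Let f : ℝⁿ → ℝ be convex differentiable. Fix matrices A_C, E_C and vectors, and suppose for each j in a finite index set J there are points x_C^{0,j}, multipliers λ_A^{(j)}, λ_E^{(j)} ≥ 0 satisfying the KKT conditions ∇_C f(x_I^{(j)}, x_C^{0,j}) = A_Cᵀλ_A^{(j)} − E_Cᵀλ_E^{(j)}, complementary slackness, and attaining φ̂(0). Then for u close to 0 in the sublevel region with φ̂(u) attained by index j, one has φ̂(0) − φ̂(u) ≤ ‖λ_A^{(j)}‖·‖u‖; hence with Γ = max_j ‖λ_A^{(j)}‖, φ̂(0) − φ̂(u) ≤ Γ‖u‖ for all such u. -/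

import Mathlib

open scoped RealInnerProductSpace Matrix

/-- Reinterpret a plain vector as an element of Euclidean space. -/
def toEuc {m : ℕ} (v : Fin m → ℝ) : EuclideanSpace ℝ (Fin m) := WithLp.toLp 2 v

lemma euc_inner_dot {d : ℕ} (a c : EuclideanSpace ℝ (Fin d)) :
    ⟪a, c⟫ = (a : Fin d → ℝ) ⬝ᵥ c := by
  simp [PiLp.inner_apply, dotProduct, mul_comm]

/-- Lemma 9 of the paper: calmness of the MICP value function.
For each index `j` in a finite set, `f j` is convex differentiable (gradient `g j`),
`x0 j` is feasible for the continuous restriction at `u = 0` with KKT multipliers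
`lamA j`, `lamE j ≥ 0` and attains the common optimal value `φ0 = φ̂(0)`.
Then for every perturbation `u` and every `x` feasible for index `j` at `u`
(in particular for an optimizer attaining `φ̂(u)`), one has
`φ̂(0) − f j x ≤ ‖lamA j‖·‖u‖`, and hence with `Γ = max_j ‖lamA j‖`,
`φ̂(0) − f j x ≤ Γ‖u‖`. -/
theorem value_function_calmness
    {nC m p k : ℕ} (hk : 0 < k)
    (f : Fin k → EuclideanSpace ℝ (Fin nC) → ℝ)
    (g : Fin k → EuclideanSpace ℝ (Fin nC) → EuclideanSpace ℝ (Fin nC))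
    (hconv : ∀ j, ∀ x y : EuclideanSpace ℝ (Fin nC), f j x + ⟪g j x, y - x⟫ ≤ f j y)
    (AC : Matrix (Fin m) (Fin nC) ℝ) (EC : Matrix (Fin p) (Fin nC) ℝ)
    (b : Fin k → EuclideanSpace ℝ (Fin m)) (f₀ : Fin k → Fin p → ℝ)
    (x0 : Fin k → EuclideanSpace ℝ (Fin nC))
    (lamA : Fin k → EuclideanSpace ℝ (Fin m)) (lamE : Fin k → Fin p → ℝ)
    (φ0 : ℝ)
    -- feasibility of each `x0 j` at `u = 0`
    (hfeasA : ∀ j, toEuc (AC.mulVec (x0 j)) = b j)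
    (hfeasE : ∀ j i, EC.mulVec (x0 j) i ≤ f₀ j i)
    -- each `x0 j` attains the common optimal value `φ̂(0)`
    (hval : ∀ j, f j (x0 j) = φ0)
    (hopt : ∀ j, ∀ x : EuclideanSpace ℝ (Fin nC),
      toEuc (AC.mulVec x) = b j → (∀ i, EC.mulVec x i ≤ f₀ j i) → φ0 ≤ f j x)
    -- KKT conditions at `u = 0` for each `j`
    (hstat : ∀ j, g j (x0 j) =
      toEuc (AC.transpose.mulVec (lamA j)) - toEuc (EC.transpose.mulVec (lamE j)))
    (hcomp : ∀ j, lamE j ⬝ᵥ (f₀ j - EC.mulVec (x0 j)) = 0)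
    (hlamE : ∀ j i, 0 ≤ lamE j i) :
    ∀ (u : EuclideanSpace ℝ (Fin m)) (j : Fin k) (x : EuclideanSpace ℝ (Fin nC)),
      toEuc (AC.mulVec x) = b j + u → (∀ i, EC.mulVec x i ≤ f₀ j i) →
      φ0 - f j x ≤ ‖lamA j‖ * ‖u‖ ∧
      φ0 - f j x ≤
        (Finset.univ.sup' (@Finset.univ_nonempty (Fin k) _ ⟨⟨0, hk⟩⟩)
          (fun j' => ‖lamA j'‖)) * ‖u‖ := by

  intro u j x hA hE
  have key : φ0 - f j x ≤ ‖lamA j‖ * ‖u‖ := by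
    have hcv := hconv j (x0 j) x
    rw [hval j] at hcv
    have h1 : φ0 - f j x ≤ -⟪g j (x0 j), x - x0 j⟫ := by linarith
    rw [hstat j] at h1
    have hsplit : ⟪toEuc (AC.transpose.mulVec (lamA j)) - toEuc (EC.transpose.mulVec (lamE j)), x - x0 j⟫
        = (lamA j : Fin m → ℝ) ⬝ᵥ (AC.mulVec ((x : Fin nC → ℝ) - x0 j))
          - (lamE j) ⬝ᵥ (EC.mulVec ((x : Fin nC → ℝ) - x0 j)) := by
      rw [inner_sub_left, euc_inner_dot, euc_inner_dot]
      have e1 : (toEuc (AC.transpose.mulVec (lamA j)) : Fin nC → ℝ) ⬝ᵥ ((x : EuclideanSpace ℝ (Fin nC)) - x0 j)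
          = (lamA j : Fin m → ℝ) ⬝ᵥ (AC.mulVec ((x : Fin nC → ℝ) - x0 j)) := by
        show (AC.transpose.mulVec (lamA j)) ⬝ᵥ _ = _
        rw [Matrix.mulVec_transpose, ← Matrix.dotProduct_mulVec]
      have e2 : (toEuc (EC.transpose.mulVec (lamE j)) : Fin nC → ℝ) ⬝ᵥ ((x : EuclideanSpace ℝ (Fin nC)) - x0 j)
          = (lamE j) ⬝ᵥ (EC.mulVec ((x : Fin nC → ℝ) - x0 j)) := by
        show (EC.transpose.mulVec (lamE j)) ⬝ᵥ _ = _
        rw [Matrix.mulVec_transpose, ← Matrix.dotProduct_mulVec]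
      rw [WithLp.ofLp_sub, e1, e2]
    have hAu : AC.mulVec ((x : Fin nC → ℝ) - x0 j) = (u : Fin m → ℝ) := by
      rw [Matrix.mulVec_sub]
      have h2 : AC.mulVec (x : Fin nC → ℝ) = (b j : Fin m → ℝ) + u := by simpa [toEuc] using congrArg WithLp.ofLp hA
      have h3 : AC.mulVec (x0 j : Fin nC → ℝ) = (b j : Fin m → ℝ) := by simpa [toEuc] using congrArg WithLp.ofLp (hfeasA j)
      rw [h2, h3]; abel
    have hEterm : (lamE j) ⬝ᵥ (EC.mulVec ((x : Fin nC → ℝ) - x0 j)) ≤ 0 := by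
      rw [Matrix.mulVec_sub, dotProduct_sub]
      have hc : (lamE j) ⬝ᵥ (f₀ j) = (lamE j) ⬝ᵥ (EC.mulVec (x0 j)) := by
        have := hcomp j
        rw [dotProduct_sub] at this
        linarith
      have hle : (lamE j) ⬝ᵥ (EC.mulVec (x : Fin nC → ℝ)) ≤ (lamE j) ⬝ᵥ (f₀ j) := by
        apply Finset.sum_le_sum
        intro i _
        exact mul_le_mul_of_nonneg_left (hE i) (hlamE j i)
      linarith
    have hAbound : -((lamA j : Fin m → ℝ) ⬝ᵥ (u : Fin m → ℝ)) ≤ ‖lamA j‖ * ‖u‖ := by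
      have := abs_real_inner_le_norm (lamA j) u
      rw [euc_inner_dot] at this
      exact le_trans (neg_le_abs _) this
    rw [hsplit, hAu] at h1
    have : -((lamA j : Fin m → ℝ) ⬝ᵥ (u : Fin m → ℝ) - (lamE j) ⬝ᵥ (EC.mulVec ((x : Fin nC → ℝ) - x0 j)))
        ≤ ‖lamA j‖ * ‖u‖ := by
      have := hAbound
      linarith [hEterm]
    linarith
  refine ⟨key, le_trans key ?_⟩
  apply mul_le_mul_of_nonneg_right _ (norm_nonneg u)
  exact Finset.le_sup' (fun j' => ‖lamA j'‖) (Finset.mem_univ j)
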